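/- Given n ≥ 3 and two Talenti bubbles U₁ = U[z₁,λ₁] and U₂ = U[z₂,λ₂] with λ₁ ≥ λ₂, there is a constant C(n) > 1 such that ∫_{B(z₁, λ₁⁻¹)} U₁^p U₂ ≤ ∫_{ℝⁿ} U₁^p U₂ ≤ C(n) ∫_{B(z₁, λ₁⁻¹)} U₁^p U₂; that is, the interaction integral ∫_{ℝⁿ} U₁^p U₂ is comparable to its restriction to the ball B(z₁, λ₁⁻¹). -/

import Mathlib

/-!
Localization of the interaction integral `∫ U₁^p U₂` on the ball `B(z₁, λ₁⁻¹)`.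
-/

open MeasureTheory Filter

noncomputable section

abbrev Rn (n : ℕ) := EuclideanSpace ℝ (Fin n)

/-- The exponent `p = (n+2)/(n-2)`. -/
def pExp (n : ℕ) : ℝ := ((n : ℝ) + 2) / ((n : ℝ) - 2)

/-- The Talenti bubble `U[z,λ]`. -/
def talenti (n : ℕ) (z : Rn n) (lam : ℝ) (x : Rn n) : ℝ :=
  ((n : ℝ) * ((n : ℝ) - 2)) ^ (((n : ℝ) - 2) / 4) * lam ^ (((n : ℝ) - 2) / 2) *
    (1 + lam ^ 2 * ‖x - z‖ ^ 2) ^ (-(((n : ℝ) - 2) / 2))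

open Metric

namespace Stmt18Aux

/-- The standard profile `(1+‖y‖²)^(-a)`. -/
def g (n : ℕ) (a : ℝ) (y : Rn n) : ℝ := (1 + ‖y‖ ^ 2) ^ (-a)

/-- The rescaled/translated profile. -/
def G (n : ℕ) (a lam : ℝ) (z x : Rn n) : ℝ := (1 + lam ^ 2 * ‖x - z‖ ^ 2) ^ (-a)

variable {n : ℕ}

lemma base_pos (lam : ℝ) (z x : Rn n) : (0:ℝ) < 1 + lam ^ 2 * ‖x - z‖ ^ 2 := by positivity

lemma one_le_base (lam : ℝ) (z x : Rn n) : (1:ℝ) ≤ 1 + lam ^ 2 * ‖x - z‖ ^ 2 :=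
  le_add_of_nonneg_right (by positivity)

lemma G_nonneg (a lam : ℝ) (z x : Rn n) : 0 ≤ G n a lam z x :=
  Real.rpow_nonneg (base_pos lam z x).le _

lemma g_nonneg (a : ℝ) (y : Rn n) : 0 ≤ g n a y :=
  Real.rpow_nonneg (by positivity) _

lemma G_le_one {a : ℝ} (ha : 0 ≤ a) (lam : ℝ) (z x : Rn n) : G n a lam z x ≤ 1 :=
  Real.rpow_le_one_of_one_le_of_nonpos (one_le_base lam z x) (neg_nonpos.2 ha)

lemma continuous_G (a lam : ℝ) (z : Rn n) : Continuous (G n a lam z) := by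
  apply Continuous.rpow_const
  · fun_prop
  · intro x
    exact Or.inl (base_pos lam z x).ne'

lemma integrable_g {a : ℝ} (ha : (n:ℝ) < 2 * a) : Integrable (g n a) := by
  have h := integrable_rpow_neg_one_add_norm_sq (E := Rn n) (μ := volume) (r := 2*a)
    (by rwa [finrank_euclideanSpace_fin])
  have : ∀ y : Rn n, ((1:ℝ) + ‖y‖ ^ 2) ^ (-(2*a)/2) = g n a y := by
    intro y
    unfold g
    congr 1
    ring
  simpa only [this] using h

lemma G_eq_comp (a : ℝ) {lam : ℝ} (hlam : 0 ≤ lam) (z x : Rn n) :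
    G n a lam z x = g n a (lam • (x - z)) := by
  unfold g G
  rw [norm_smul, Real.norm_eq_abs, mul_pow, sq_abs]

lemma integral_G (a : ℝ) {lam : ℝ} (hlam : 0 < lam) (z : Rn n) :
    ∫ x, G n a lam z x = (lam ^ n)⁻¹ * ∫ y, g n a y := by
  have h1 : (fun x : Rn n => G n a lam z x) = fun x => (fun v => g n a (lam • v)) (x - z) :=
    funext fun x => G_eq_comp a hlam.le z x
  rw [h1, integral_sub_right_eq_self (fun v => g n a (lam • v)) z,
    Measure.integral_comp_smul_of_nonneg volume (g n a) lam (hR := hlam.le),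
    finrank_euclideanSpace_fin, smul_eq_mul]

lemma integrable_G {a : ℝ} (ha : (n:ℝ) < 2 * a) {lam : ℝ} (hlam : 0 < lam) (z : Rn n) :
    Integrable (fun x => G n a lam z x) := by
  have h : Integrable (fun v : Rn n => g n a (lam • v)) :=
    (integrable_comp_smul_iff volume (g n a) hlam.ne').2 (integrable_g ha)
  have h2 : Integrable (fun x : Rn n => g n a (lam • (x - z))) := h.comp_sub_right z
  have h3 : (fun x : Rn n => G n a lam z x) = fun x => g n a (lam • (x - z)) :=
    funext fun x => G_eq_comp a hlam.le z x
  rw [h3]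
  exact h2

lemma G_le_far {a lam dd : ℝ} (ha : 0 ≤ a) (hlam : 0 < lam) (hdd : 0 < dd) {z x : Rn n}
    (hx : dd / 2 ≤ ‖x - z‖) : G n a lam z x ≤ 4 ^ a * (lam * dd) ^ (-(2 * a)) := by
  have hb : (lam * (dd/2)) ^ 2 ≤ 1 + lam ^ 2 * ‖x - z‖ ^ 2 := by
    have h1 : (dd/2) ^ 2 ≤ ‖x - z‖ ^ 2 := by
      have := norm_nonneg (x - z)
      nlinarith
    nlinarith [sq_nonneg lam]
  calc G n a lam z x ≤ ((lam * (dd/2)) ^ 2) ^ (-a) :=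
        Real.rpow_le_rpow_of_nonpos (by positivity) hb (neg_nonpos.2 ha)
    _ = 4 ^ a * (lam * dd) ^ (-(2 * a)) := by
        rw [show (lam * (dd/2)) ^ 2 = (lam * dd) ^ 2 / 4 by ring,
          Real.div_rpow (by positivity) (by norm_num),
          Real.rpow_neg (by norm_num : (0:ℝ) ≤ 4), div_inv_eq_mul,
          ← Real.rpow_natCast (lam * dd) 2, ← Real.rpow_mul (by positivity)]
        rw [mul_comm]
        congr 1
        push_cast
        ring

/-- Crossing powers scalar inequality. -/
lemma scalar_key {l1 l2 dd : ℝ} (m : ℕ) (hl2 : 0 < l2) (hl12 : l2 ≤ l1) (hdd : 0 < dd)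
    (h1 : 1 ≤ l1 * dd) :
    ((l1*dd)^(m+4))⁻¹ * ((l2*dd)^3 * (l2^(m+2))⁻¹) ≤ ((l2*dd)^m)⁻¹ * (l1^(m+2))⁻¹ := by
  have hl1 : 0 < l1 := lt_of_lt_of_le hl2 hl12
  have e1 : ((l1*dd)^(m+4))⁻¹ * ((l2*dd)^3 * (l2^(m+2))⁻¹)
      = (l2*dd)^3 / ((l1*dd)^(m+4) * l2^(m+2)) := by
    field_simp
  have e2 : ((l2*dd)^m)⁻¹ * (l1^(m+2))⁻¹ = 1 / ((l2*dd)^m * l1^(m+2)) := by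
    field_simp
  rw [e1, e2, div_le_div_iff₀ (by positivity) (by positivity)]
  have hkey : l2 ≤ l1 * (l1 * dd) := by nlinarith
  calc (l2*dd)^3 * ((l2*dd)^m * l1^(m+2))
      = (l2^(m+2) * dd^(m+3) * l1^(m+2)) * l2 := by ring
    _ ≤ (l2^(m+2) * dd^(m+3) * l1^(m+2)) * (l1 * (l1 * dd)) := by
        apply mul_le_mul_of_nonneg_left hkey (by positivity)
    _ = 1 * ((l1*dd)^(m+4) * l2^(m+2)) := by ring

/-- Decomposition of the integrand into constants times profiles. -/
lemma talenti_pow_mul (n : ℕ) (hn : 3 ≤ n) (z₁ z₂ : Rn n) {lam₁ lam₂ : ℝ}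
    (h1 : 0 < lam₁) (h2 : 0 < lam₂) (x : Rn n) :
    talenti n z₁ lam₁ x ^ pExp n * talenti n z₂ lam₂ x =
      ((((n:ℝ) * ((n:ℝ) - 2)) ^ (((n:ℝ) - 2)/4)) ^ (pExp n + 1) * lam₁ ^ (((n:ℝ)+2)/2)
          * lam₂ ^ (((n:ℝ)-2)/2)) *
        (G n (((n:ℝ)+2)/2) lam₁ z₁ x * G n (((n:ℝ)-2)/2) lam₂ z₂ x) := by
  have hn3 : (3:ℝ) ≤ (n:ℝ) := by exact_mod_cast hn
  have hn2 : (0:ℝ) < (n:ℝ) - 2 := by linarith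
  have hcnb : (0:ℝ) < (n:ℝ) * ((n:ℝ) - 2) := by nlinarith
  have hcn : (0:ℝ) < ((n:ℝ) * ((n:ℝ) - 2)) ^ (((n:ℝ) - 2)/4) := Real.rpow_pos_of_pos hcnb _
  have hap : ((n:ℝ)-2)/2 * pExp n = ((n:ℝ)+2)/2 := by
    unfold pExp
    field_simp
  have hapneg : (-(((n:ℝ)-2)/2)) * pExp n = -(((n:ℝ)+2)/2) := by
    rw [neg_mul, hap]
  unfold talenti G
  rw [Real.mul_rpow (by positivity) (Real.rpow_nonneg (base_pos lam₁ z₁ x).le _),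
    Real.mul_rpow hcn.le (Real.rpow_nonneg h1.le _),
    ← Real.rpow_mul h1.le, ← Real.rpow_mul (base_pos lam₁ z₁ x).le,
    hap, hapneg, Real.rpow_add hcn, Real.rpow_one]
  ring

end Stmt18Aux

set_option maxHeartbeats 1000000 in
/-- For `n ≥ 3` there is `C(n) > 1` such that for two Talenti bubbles
`U₁ = U[z₁,λ₁]`, `U₂ = U[z₂,λ₂]` with `λ₁ ≥ λ₂ > 0`:
`∫_{B(z₁,λ₁⁻¹)} U₁^p U₂ ≤ ∫_{ℝⁿ} U₁^p U₂ ≤ C(n) ∫_{B(z₁,λ₁⁻¹)} U₁^p U₂`. -/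
theorem stmt18 (n : ℕ) (hn : 3 ≤ n) :
    ∃ C : ℝ, 1 < C ∧
      ∀ (z₁ z₂ : Rn n) (lam₁ lam₂ : ℝ), 0 < lam₂ → lam₂ ≤ lam₁ →
        (∫ x in Metric.ball z₁ lam₁⁻¹,
            talenti n z₁ lam₁ x ^ pExp n * talenti n z₂ lam₂ x) ≤
          (∫ x : Rn n, talenti n z₁ lam₁ x ^ pExp n * talenti n z₂ lam₂ x) ∧
        (∫ x : Rn n, talenti n z₁ lam₁ x ^ pExp n * talenti n z₂ lam₂ x) ≤
          C * ∫ x in Metric.ball z₁ lam₁⁻¹,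
            talenti n z₁ lam₁ x ^ pExp n * talenti n z₂ lam₂ x := by
  have hn3 : (3:ℝ) ≤ (n:ℝ) := by exact_mod_cast hn
  have hn2 : (0:ℝ) < (n:ℝ) - 2 := by linarith
  -- the exponents
  set a : ℝ := ((n:ℝ) - 2)/2 with ha_def
  set b : ℝ := ((n:ℝ) + 2)/2 with hb_def
  set c : ℝ := ((n:ℝ) + 1)/2 with hc_def
  have ha : 0 < a := by rw [ha_def]; linarith
  have hb : 0 < b := by rw [hb_def]; linarith
  have hnb : (n:ℝ) < 2 * b := by rw [hb_def]; linarith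
  have hnc : (n:ℝ) < 2 * c := by rw [hc_def]; linarith
  -- dimensional constants
  set Jb : ℝ := ∫ y, Stmt18Aux.g n b y with hJb_def
  set Jc : ℝ := ∫ y, Stmt18Aux.g n c y with hJc_def
  have hJb0 : 0 ≤ Jb := integral_nonneg fun y => Stmt18Aux.g_nonneg b y
  have hJc0 : 0 ≤ Jc := integral_nonneg fun y => Stmt18Aux.g_nonneg c y
  haveI : Nonempty (Fin n) := ⟨⟨0, by omega⟩⟩
  haveI hnontriv : Nontrivial (Rn n) := inferInstance
  set vn : ℝ := (volume (Metric.ball (0 : Rn n) 1)).toReal with hvn_def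
  have hvn0 : 0 < vn := by
    rw [hvn_def]
    exact ENNReal.toReal_pos (measure_ball_pos volume 0 one_pos).ne' measure_ball_lt_top.ne
  set M : ℝ := 4^a*2^a*Jb + 4^b*2^((3:ℝ)/2)*2^a*Jc with hM_def
  have hM0 : 0 ≤ M := by
    rw [hM_def]
    have h1 : (0:ℝ) ≤ 4^a*2^a*Jb := by positivity
    have h2 : (0:ℝ) ≤ 4^b*2^((3:ℝ)/2)*2^a*Jc := by positivity
    linarith
  have hfrac0 : (0:ℝ) ≤ 2^b*3^a/vn := by positivity
  refine ⟨2 + M * (2^b*3^a/vn), by linarith only [mul_nonneg hM0 hfrac0], ?_⟩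
  intro z₁ z₂ lam₁ lam₂ hl2 hl12
  have hl1 : 0 < lam₁ := lt_of_lt_of_le hl2 hl12
  set d : ℝ := ‖z₁ - z₂‖ with hd_def
  have hd0 : 0 ≤ d := norm_nonneg _
  set K : ℝ := (((n:ℝ) * ((n:ℝ) - 2)) ^ (((n:ℝ) - 2)/4)) ^ (pExp n + 1) * lam₁ ^ b * lam₂ ^ a
    with hK_def
  have hcnb : (0:ℝ) < (n:ℝ) * ((n:ℝ) - 2) := by linarith only [hn3, sq_nonneg ((n:ℝ) - 3)]
  have hK0 : 0 ≤ K := by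
    rw [hK_def]
    have := Real.rpow_pos_of_pos hcnb (((n:ℝ) - 2)/4)
    positivity
  set F : Rn n → ℝ := fun x => Stmt18Aux.G n b lam₁ z₁ x * Stmt18Aux.G n a lam₂ z₂ x with hF_def
  have hFrw : ∀ x, talenti n z₁ lam₁ x ^ pExp n * talenti n z₂ lam₂ x = K * F x := by
    intro x
    rw [Stmt18Aux.talenti_pow_mul n hn z₁ z₂ hl1 hl2 x]
  have hFnn : ∀ x, 0 ≤ F x := fun x =>
    mul_nonneg (Stmt18Aux.G_nonneg _ _ _ _) (Stmt18Aux.G_nonneg _ _ _ _)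
  have hG1int : Integrable (fun x => Stmt18Aux.G n b lam₁ z₁ x) :=
    Stmt18Aux.integrable_G hnb hl1 z₁
  have hGcint : Integrable (fun x => Stmt18Aux.G n c lam₂ z₂ x) :=
    Stmt18Aux.integrable_G hnc hl2 z₂
  have hFle : ∀ x, F x ≤ Stmt18Aux.G n b lam₁ z₁ x := by
    intro x
    calc F x ≤ Stmt18Aux.G n b lam₁ z₁ x * 1 :=
          mul_le_mul_of_nonneg_left (Stmt18Aux.G_le_one ha.le _ _ _) (Stmt18Aux.G_nonneg _ _ _ _)
      _ = Stmt18Aux.G n b lam₁ z₁ x := mul_one _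
  have hFint : Integrable F := by
    apply hG1int.mono'
    · exact ((Stmt18Aux.continuous_G b lam₁ z₁).mul
        (Stmt18Aux.continuous_G a lam₂ z₂)).aestronglyMeasurable
    · filter_upwards with x
      rw [Real.norm_eq_abs, abs_of_nonneg (hFnn x)]
      exact hFle x
  set S : ℝ := (1 + lam₂^2 * d^2) ^ (-a) with hS_def
  have hS0 : 0 ≤ S := by rw [hS_def]; positivity
  set B := Metric.ball z₁ lam₁⁻¹ with hB_def
  -- lower bound for the ball integral
  have hlow : ∀ x ∈ B, 2^(-b) * (3^(-a) * S) ≤ F x := by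
    intro x hx
    simp only [hB_def, Metric.mem_ball, dist_eq_norm] at hx
    have hxz1 : ‖x - z₁‖ ≤ lam₁⁻¹ := hx.le
    have hinv : lam₁^2 * (lam₁⁻¹)^2 = 1 := by field_simp
    have hsqx : ‖x - z₁‖^2 ≤ (lam₁⁻¹)^2 := pow_le_pow_left₀ (norm_nonneg _) hxz1 2
    have hbase1 : 1 + lam₁^2 * ‖x - z₁‖^2 ≤ 2 := by
      have hmm : lam₁^2 * ‖x - z₁‖^2 ≤ lam₁^2 * (lam₁⁻¹)^2 :=
        mul_le_mul_of_nonneg_left hsqx (sq_nonneg lam₁)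
      linarith only [hinv, hmm]
    have h1 : 2^(-b) ≤ Stmt18Aux.G n b lam₁ z₁ x :=
      Real.rpow_le_rpow_of_nonpos (Stmt18Aux.base_pos lam₁ z₁ x) hbase1 (neg_nonpos.2 hb.le)
    have htri : ‖x - z₂‖ ≤ lam₁⁻¹ + d := by
      have he : x - z₂ = (x - z₁) + (z₁ - z₂) := by abel
      rw [hd_def, he]
      exact (norm_add_le _ _).trans (add_le_add hxz1 le_rfl)
    have hq1 : lam₂ * lam₁⁻¹ ≤ 1 := by
      rw [← div_eq_mul_inv]
      exact (div_le_one hl1).2 hl12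
    have hq0 : (0:ℝ) ≤ lam₂ * lam₁⁻¹ := by positivity
    have ht2 : lam₂ * ‖x - z₂‖ ≤ lam₂ * lam₁⁻¹ + lam₂ * d := by
      have h := mul_le_mul_of_nonneg_left htri hl2.le
      rw [mul_add] at h
      exact h
    have hsq : lam₂^2 * ‖x - z₂‖^2 ≤ (lam₂ * lam₁⁻¹ + lam₂ * d)^2 := by
      have h := pow_le_pow_left₀ (mul_nonneg hl2.le (norm_nonneg _)) ht2 2
      calc lam₂^2 * ‖x - z₂‖^2 = (lam₂ * ‖x - z₂‖)^2 := by ring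
        _ ≤ _ := h
    have hq2 : (lam₂ * lam₁⁻¹)^2 ≤ 1 := by nlinarith only [hq0, hq1]
    have hbase2 : 1 + lam₂^2 * ‖x - z₂‖^2 ≤ 3 * (1 + lam₂^2 * d^2) := by
      linarith only [hsq, hq2, sq_nonneg (lam₂ * lam₁⁻¹ - lam₂ * d), sq_nonneg (lam₂ * d)]
    have h2 : 3^(-a) * S ≤ Stmt18Aux.G n a lam₂ z₂ x := by
      rw [hS_def, ← Real.mul_rpow (by norm_num : (0:ℝ) ≤ 3) (by positivity)]
      exact Real.rpow_le_rpow_of_nonpos (Stmt18Aux.base_pos lam₂ z₂ x)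
        (by linarith) (neg_nonpos.2 ha.le)
    calc 2^(-b) * (3^(-a) * S)
        ≤ Stmt18Aux.G n b lam₁ z₁ x * Stmt18Aux.G n a lam₂ z₂ x :=
          mul_le_mul h1 h2 (mul_nonneg (Real.rpow_nonneg (by norm_num) _) hS0)
            (Stmt18Aux.G_nonneg _ _ _ _)
      _ = F x := rfl
  have hvol : (volume B).toReal = (lam₁ ^ n)⁻¹ * vn := by
    rw [hB_def, Measure.addHaar_ball volume z₁ (by positivity : (0:ℝ) ≤ lam₁⁻¹),
      ENNReal.toReal_mul, ENNReal.toReal_ofReal (by positivity),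
      finrank_euclideanSpace_fin, inv_pow, hvn_def]
  have hBlow : 2^(-b) * (3^(-a) * S) * ((lam₁ ^ n)⁻¹ * vn) ≤ ∫ x in B, F x := by
    have h := setIntegral_ge_of_const_le_real measurableSet_ball measure_ball_lt_top.ne hlow
      hFint.integrableOn
    have h2 : volume.real (Metric.ball z₁ lam₁⁻¹) = (lam₁ ^ n)⁻¹ * vn := hvol
    rwa [h2] at h
  -- upper bound for the full integral
  have hIG1 : ∫ x, Stmt18Aux.G n b lam₁ z₁ x = (lam₁ ^ n)⁻¹ * Jb :=
    Stmt18Aux.integral_G b hl1 z₁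
  have hIGc : ∫ x, Stmt18Aux.G n c lam₂ z₂ x = (lam₂ ^ n)⁻¹ * Jc :=
    Stmt18Aux.integral_G c hl2 z₂
  have hup : ∫ x, F x ≤ M * (S * (lam₁ ^ n)⁻¹) := by
    have hinv1 : (0:ℝ) ≤ (lam₁ ^ n)⁻¹ := by positivity
    have hl2d0 : (0:ℝ) ≤ lam₂ * d := mul_nonneg hl2.le hd0
    have h2a0 : (0:ℝ) ≤ 2^a := Real.rpow_nonneg (by norm_num) _
    rcases le_or_gt (lam₂ * d) 1 with hcase | hcase
    · -- Case λ₂ d ≤ 1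
      have hS1 : 1 ≤ 2^a * S := by
        have hbd : 1 + lam₂^2 * d^2 ≤ 2 := by nlinarith only [hl2d0, hcase]
        have hss : (2:ℝ)^(-a) ≤ S := by
          rw [hS_def]
          exact Real.rpow_le_rpow_of_nonpos (by positivity) hbd (neg_nonpos.2 ha.le)
        calc (1:ℝ) = 2^a * 2^(-a) := by
              rw [← Real.rpow_add two_pos, add_neg_cancel, Real.rpow_zero]
          _ ≤ 2^a * S := mul_le_mul_of_nonneg_left hss h2a0
      have h4a : (1:ℝ) ≤ 4^a := by
        calc (1:ℝ) = 4^(0:ℝ) := (Real.rpow_zero 4).symm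
          _ ≤ 4^a := Real.rpow_le_rpow_of_exponent_le (by norm_num) ha.le
      have hJM : Jb ≤ M * S := by
        have hX : (0:ℝ) ≤ 4^b*2^((3:ℝ)/2)*2^a*Jc * S :=
          mul_nonneg (mul_nonneg (mul_nonneg (mul_nonneg
            (Real.rpow_nonneg (by norm_num) _) (Real.rpow_nonneg (by norm_num) _)) h2a0)
            hJc0) hS0
        calc Jb = 1 * Jb := (one_mul Jb).symm
          _ ≤ (2^a * S) * Jb := mul_le_mul_of_nonneg_right hS1 hJb0
          _ ≤ 4^a * ((2^a * S) * Jb) :=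
              le_mul_of_one_le_left (mul_nonneg (mul_nonneg h2a0 hS0) hJb0) h4a
          _ = (4^a*2^a*Jb) * S := by ring
          _ ≤ M * S := by rw [hM_def]; linarith only [hX]
      calc ∫ x, F x ≤ ∫ x, Stmt18Aux.G n b lam₁ z₁ x := integral_mono hFint hG1int hFle
        _ = (lam₁ ^ n)⁻¹ * Jb := hIG1
        _ ≤ (lam₁ ^ n)⁻¹ * (M * S) := mul_le_mul_of_nonneg_left hJM hinv1
        _ = M * (S * (lam₁ ^ n)⁻¹) := by ring
    · -- Case λ₂ d > 1
      have hd1 : 0 < d := by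
        rcases le_or_gt d 0 with h | h
        · exact absurd (mul_nonpos_of_nonneg_of_nonpos hl2.le h) (by linarith only [hcase])
        · exact h
      have h1d : 1 ≤ lam₁ * d := by
        have h := mul_le_mul_of_nonneg_right hl12 hd1.le
        linarith only [hcase, h]
      have hQmeas : MeasurableSet (Metric.ball z₂ (d/2)) := measurableSet_ball
      have hsplit : ∫ x, F x = (∫ x in Metric.ball z₂ (d/2), F x)
          + ∫ x in (Metric.ball z₂ (d/2))ᶜ, F x :=
        (integral_add_compl hQmeas hFint).symm
      have cP0 : (0:ℝ) ≤ 4^a * (lam₂*d)^(-(2*a)) :=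
        mul_nonneg (Real.rpow_nonneg (by norm_num) _) (Real.rpow_nonneg hl2d0 _)
      have hPpt : ∀ x ∈ (Metric.ball z₂ (d/2))ᶜ,
          F x ≤ (4^a * (lam₂*d)^(-(2*a))) * Stmt18Aux.G n b lam₁ z₁ x := by
        intro x hx
        have hxd : d/2 ≤ ‖x - z₂‖ := by
          simp only [Set.mem_compl_iff, Metric.mem_ball, dist_eq_norm, not_lt] at hx
          exact hx
        have h2 := Stmt18Aux.G_le_far ha.le hl2 hd1 hxd
        calc F x ≤ Stmt18Aux.G n b lam₁ z₁ x * (4^a * (lam₂*d)^(-(2*a))) :=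
              mul_le_mul_of_nonneg_left h2 (Stmt18Aux.G_nonneg _ _ _ _)
          _ = _ := by ring
      have hP : ∫ x in (Metric.ball z₂ (d/2))ᶜ, F x
          ≤ (4^a * (lam₂*d)^(-(2*a))) * ((lam₁ ^ n)⁻¹ * Jb) := by
        calc ∫ x in (Metric.ball z₂ (d/2))ᶜ, F x
            ≤ ∫ x in (Metric.ball z₂ (d/2))ᶜ,
                (4^a * (lam₂*d)^(-(2*a))) * Stmt18Aux.G n b lam₁ z₁ x :=
              setIntegral_mono_on hFint.integrableOn
                ((hG1int.const_mul _).integrableOn) hQmeas.compl hPpt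
          _ = (4^a * (lam₂*d)^(-(2*a)))
                * ∫ x in (Metric.ball z₂ (d/2))ᶜ, Stmt18Aux.G n b lam₁ z₁ x :=
              integral_const_mul _ _
          _ ≤ (4^a * (lam₂*d)^(-(2*a))) * ∫ x, Stmt18Aux.G n b lam₁ z₁ x := by
              apply mul_le_mul_of_nonneg_left _ cP0
              exact setIntegral_le_integral hG1int
                (Filter.Eventually.of_forall fun x => Stmt18Aux.G_nonneg _ _ _ _)
          _ = (4^a * (lam₂*d)^(-(2*a))) * ((lam₁ ^ n)⁻¹ * Jb) := by rw [hIG1]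
      have hcq1 : (0:ℝ) ≤ 4^b * (lam₁*d)^(-(2*b)) :=
        mul_nonneg (Real.rpow_nonneg (by norm_num) _)
          (Real.rpow_nonneg (mul_nonneg hl1.le hd0) _)
      have hcq2 : (0:ℝ) ≤ 2^((3:ℝ)/2) * (lam₂*d)^3 :=
        mul_nonneg (Real.rpow_nonneg (by norm_num) _) (pow_nonneg hl2d0 3)
      have hQpt : ∀ x ∈ Metric.ball z₂ (d/2),
          F x ≤ ((4^b * (lam₁*d)^(-(2*b))) * (2^((3:ℝ)/2) * (lam₂*d)^3))
            * Stmt18Aux.G n c lam₂ z₂ x := by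
        intro x hx
        simp only [Metric.mem_ball, dist_eq_norm] at hx
        have hx1 : d/2 ≤ ‖x - z₁‖ := by
          have he : z₁ - z₂ = (z₁ - x) + (x - z₂) := by abel
          have htr := norm_add_le (z₁ - x) (x - z₂)
          rw [← he] at htr
          rw [norm_sub_rev z₁ x] at htr
          rw [hd_def]
          linarith [hx, htr]
        have h1 : Stmt18Aux.G n b lam₁ z₁ x ≤ 4^b * (lam₁*d)^(-(2*b)) :=
          Stmt18Aux.G_le_far hb.le hl1 hd1 hx1
        have hsplitG : Stmt18Aux.G n a lam₂ z₂ x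
            = (1 + lam₂^2 * ‖x - z₂‖^2)^((3:ℝ)/2) * Stmt18Aux.G n c lam₂ z₂ x := by
          unfold Stmt18Aux.G
          rw [← Real.rpow_add (Stmt18Aux.base_pos lam₂ z₂ x)]
          congr 1
          rw [ha_def, hc_def]
          ring
        have h1d2 : 1 ≤ (lam₂*d)^2 := by nlinarith only [hcase]
        have hble : 1 + lam₂^2 * ‖x - z₂‖^2 ≤ 2*(lam₂*d)^2 := by
          have hmm := mul_le_mul_of_nonneg_left
            (pow_le_pow_left₀ (norm_nonneg (x - z₂)) hx.le 2) (sq_nonneg lam₂)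
          nlinarith only [hmm, h1d2]
        have hb32 : (1 + lam₂^2 * ‖x - z₂‖^2)^((3:ℝ)/2) ≤ 2^((3:ℝ)/2) * (lam₂*d)^3 := by
          calc (1 + lam₂^2 * ‖x - z₂‖^2)^((3:ℝ)/2) ≤ (2*(lam₂*d)^2)^((3:ℝ)/2) :=
                Real.rpow_le_rpow (Stmt18Aux.base_pos lam₂ z₂ x).le hble (by norm_num)
            _ = 2^((3:ℝ)/2) * (lam₂*d)^3 := by
                rw [Real.mul_rpow (by norm_num) (sq_nonneg _)]
                congr 1
                rw [← Real.rpow_natCast (lam₂*d) 2, ← Real.rpow_mul hl2d0,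
                  ← Real.rpow_natCast (lam₂*d) 3]
                norm_num
        have h2 : Stmt18Aux.G n a lam₂ z₂ x
            ≤ (2^((3:ℝ)/2) * (lam₂*d)^3) * Stmt18Aux.G n c lam₂ z₂ x := by
          rw [hsplitG]
          exact mul_le_mul_of_nonneg_right hb32 (Stmt18Aux.G_nonneg _ _ _ _)
        calc F x ≤ (4^b * (lam₁*d)^(-(2*b)))
              * ((2^((3:ℝ)/2) * (lam₂*d)^3) * Stmt18Aux.G n c lam₂ z₂ x) :=
              mul_le_mul h1 h2 (Stmt18Aux.G_nonneg _ _ _ _) hcq1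
          _ = _ := by ring
      have hQ : ∫ x in Metric.ball z₂ (d/2), F x
          ≤ ((4^b * (lam₁*d)^(-(2*b))) * (2^((3:ℝ)/2) * (lam₂*d)^3))
            * ((lam₂ ^ n)⁻¹ * Jc) := by
        calc ∫ x in Metric.ball z₂ (d/2), F x
            ≤ ∫ x in Metric.ball z₂ (d/2),
                ((4^b * (lam₁*d)^(-(2*b))) * (2^((3:ℝ)/2) * (lam₂*d)^3))
                  * Stmt18Aux.G n c lam₂ z₂ x :=
              setIntegral_mono_on hFint.integrableOn
                ((hGcint.const_mul _).integrableOn) hQmeas hQpt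
          _ = ((4^b * (lam₁*d)^(-(2*b))) * (2^((3:ℝ)/2) * (lam₂*d)^3))
                * ∫ x in Metric.ball z₂ (d/2), Stmt18Aux.G n c lam₂ z₂ x :=
              integral_const_mul _ _
          _ ≤ ((4^b * (lam₁*d)^(-(2*b))) * (2^((3:ℝ)/2) * (lam₂*d)^3))
                * ∫ x, Stmt18Aux.G n c lam₂ z₂ x := by
              apply mul_le_mul_of_nonneg_left _ (mul_nonneg hcq1 hcq2)
              exact setIntegral_le_integral hGcint
                (Filter.Eventually.of_forall fun x => Stmt18Aux.G_nonneg _ _ _ _)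
          _ = _ := by rw [hIGc]
      have hS2 : (lam₂*d)^(-(2*a)) ≤ 2^a * S := by
        have hX1 : 1 ≤ lam₂^2 * d^2 := by nlinarith only [hcase]
        have e : (lam₂*d)^(-(2*a)) = (lam₂^2*d^2)^(-a) := by
          rw [show lam₂^2*d^2 = (lam₂*d)^2 by ring, ← Real.rpow_natCast (lam₂*d) 2,
            ← Real.rpow_mul hl2d0]
          congr 1
          push_cast
          ring
        have e2 : ((1+lam₂^2*d^2)/2 : ℝ)^(-a) = 2^a * S := by
          rw [hS_def, Real.div_rpow (by positivity) (by norm_num : (0:ℝ) ≤ 2),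
            Real.rpow_neg (by norm_num : (0:ℝ) ≤ 2), div_inv_eq_mul, mul_comm]
        rw [e, ← e2]
        exact Real.rpow_le_rpow_of_nonpos (by positivity) (by linarith only [hX1]) (neg_nonpos.2 ha.le)
      have hscalar : (lam₁*d)^(-(2*b)) * ((lam₂*d)^3 * ((lam₂:ℝ)^n)⁻¹)
          ≤ (lam₂*d)^(-(2*a)) * ((lam₁:ℝ)^n)⁻¹ := by
        obtain ⟨m, hm⟩ : ∃ m, n = m + 2 := ⟨n - 2, by omega⟩
        have hmcast : ((m:ℝ)) = (n:ℝ) - 2 := by rw [hm]; push_cast; ring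
        have c1 : (lam₁*d)^(-(2*b)) = ((lam₁*d)^(m+4))⁻¹ := by
          rw [Real.rpow_neg (mul_nonneg hl1.le hd0)]
          congr 1
          rw [← Real.rpow_natCast (lam₁*d) (m+4)]
          congr 1
          rw [hb_def]
          push_cast
          rw [hmcast]
          ring
        have c2 : (lam₂*d)^(-(2*a)) = ((lam₂*d)^m)⁻¹ := by
          rw [Real.rpow_neg hl2d0]
          congr 1
          rw [← Real.rpow_natCast (lam₂*d) m]
          congr 1
          rw [ha_def]
          push_cast
          rw [hmcast]
          ring
        have c3 : ((lam₂:ℝ)^n)⁻¹ = (lam₂^(m+2))⁻¹ := by rw [hm]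
        have c4 : ((lam₁:ℝ)^n)⁻¹ = (lam₁^(m+2))⁻¹ := by rw [hm]
        rw [c1, c2, c3, c4]
        exact Stmt18Aux.scalar_key m hl2 hl12 hd1 h1d
      have hinv2 : (0:ℝ) ≤ (lam₂ ^ n)⁻¹ := by positivity
      have hSstep := mul_le_mul_of_nonneg_right hS2 hinv1
      have hterm1 : (4^a * (lam₂*d)^(-(2*a))) * ((lam₁ ^ n)⁻¹ * Jb)
          ≤ 4^a*2^a*Jb * (S * (lam₁ ^ n)⁻¹) := by
        calc (4^a * (lam₂*d)^(-(2*a))) * ((lam₁ ^ n)⁻¹ * Jb)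
            = (4^a*Jb) * ((lam₂*d)^(-(2*a)) * (lam₁ ^ n)⁻¹) := by ring
          _ ≤ (4^a*Jb) * (2^a * S * (lam₁ ^ n)⁻¹) :=
              mul_le_mul_of_nonneg_left hSstep
                (mul_nonneg (Real.rpow_nonneg (by norm_num) _) hJb0)
          _ = 4^a*2^a*Jb * (S * (lam₁ ^ n)⁻¹) := by ring
      have h48 : (0:ℝ) ≤ 4^b*2^((3:ℝ)/2)*Jc :=
        mul_nonneg (mul_nonneg (Real.rpow_nonneg (by norm_num) _)
          (Real.rpow_nonneg (by norm_num) _)) hJc0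
      have hterm2 : ((4^b * (lam₁*d)^(-(2*b))) * (2^((3:ℝ)/2) * (lam₂*d)^3))
            * ((lam₂ ^ n)⁻¹ * Jc)
          ≤ 4^b*2^((3:ℝ)/2)*2^a*Jc * (S * (lam₁ ^ n)⁻¹) := by
        calc ((4^b * (lam₁*d)^(-(2*b))) * (2^((3:ℝ)/2) * (lam₂*d)^3)) * ((lam₂ ^ n)⁻¹ * Jc)
            = (4^b*2^((3:ℝ)/2)*Jc) * ((lam₁*d)^(-(2*b)) * ((lam₂*d)^3 * (lam₂ ^ n)⁻¹)) := by
              ring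
          _ ≤ (4^b*2^((3:ℝ)/2)*Jc) * ((lam₂*d)^(-(2*a)) * (lam₁ ^ n)⁻¹) :=
              mul_le_mul_of_nonneg_left hscalar h48
          _ ≤ (4^b*2^((3:ℝ)/2)*Jc) * (2^a * S * (lam₁ ^ n)⁻¹) :=
              mul_le_mul_of_nonneg_left hSstep h48
          _ = 4^b*2^((3:ℝ)/2)*2^a*Jc * (S * (lam₁ ^ n)⁻¹) := by ring
      calc ∫ x, F x = (∫ x in Metric.ball z₂ (d/2), F x)
            + ∫ x in (Metric.ball z₂ (d/2))ᶜ, F x := hsplit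
        _ ≤ ((4^b * (lam₁*d)^(-(2*b))) * (2^((3:ℝ)/2) * (lam₂*d)^3)) * ((lam₂ ^ n)⁻¹ * Jc)
            + (4^a * (lam₂*d)^(-(2*a))) * ((lam₁ ^ n)⁻¹ * Jb) := add_le_add hQ hP
        _ ≤ 4^b*2^((3:ℝ)/2)*2^a*Jc * (S * (lam₁ ^ n)⁻¹)
            + 4^a*2^a*Jb * (S * (lam₁ ^ n)⁻¹) := add_le_add hterm2 hterm1
        _ = M * (S * (lam₁ ^ n)⁻¹) := by rw [hM_def]; ring
  -- combine
  have hBpos : 0 ≤ ∫ x in B, F x := setIntegral_nonneg measurableSet_ball fun x _ => hFnn x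
  have h2b0 : (0:ℝ) < 2^b := Real.rpow_pos_of_pos two_pos b
  have h3a0 : (0:ℝ) < 3^a := Real.rpow_pos_of_pos three_pos a
  have hSl : S * (lam₁ ^ n)⁻¹ ≤ (2^b*3^a/vn) * ∫ x in B, F x := by
    have heq : S * (lam₁ ^ n)⁻¹
        = (2^b*3^a/vn) * (2^(-b) * (3^(-a) * S) * ((lam₁ ^ n)⁻¹ * vn)) := by
      rw [Real.rpow_neg (by norm_num : (0:ℝ) ≤ 2), Real.rpow_neg (by norm_num : (0:ℝ) ≤ 3)]
      field_simp
    rw [heq]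
    exact mul_le_mul_of_nonneg_left hBlow (by positivity)
  have hmain : ∫ x, F x ≤ (2 + M * (2^b*3^a/vn)) * ∫ x in B, F x := by
    calc ∫ x, F x ≤ M * (S * (lam₁ ^ n)⁻¹) := hup
      _ ≤ M * ((2^b*3^a/vn) * ∫ x in B, F x) := mul_le_mul_of_nonneg_left hSl hM0
      _ = (M * (2^b*3^a/vn)) * ∫ x in B, F x := by ring
      _ ≤ (2 + M * (2^b*3^a/vn)) * ∫ x in B, F x :=
          mul_le_mul_of_nonneg_right (by linarith) hBpos
  constructor
  · simp only [hFrw]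
    apply setIntegral_le_integral (hFint.const_mul K)
    filter_upwards with x
    exact mul_nonneg hK0 (hFnn x)
  · simp only [hFrw]
    rw [integral_const_mul, integral_const_mul]
    calc K * ∫ x, F x ≤ K * ((2 + M * (2^b*3^a/vn)) * ∫ x in B, F x) :=
          mul_le_mul_of_nonneg_left hmain hK0
      _ = (2 + M * (2^b*3^a/vn)) * (K * ∫ x in B, F x) := by ring


end
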